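/- Let (ω_j)_{j=1..D} be independent standard Gaussian random variables, ν_j, v_j real numbers, Z_j = ν_j + v_j ω_j, T = Σ_{j=1}^D Z_j², and Σ = Σ_{j=1}^D v_j⁴ + 2 Σ_{j=1}^D v_j² ν_j². Then for all x > 0, P(T − E[T] > 2√(Σx) + 2x·max_{1≤j≤D} v_j²) ≤ exp(−x). -/

import Mathlib

open MeasureTheory ProbabilityTheory Real
open scoped ENNReal NNReal

lemma my_log_ineq {u : ℝ} (h0 : 0 ≤ u) (h1 : u < 1) :
    -Real.log (1 - u) ≤ u + u ^ 2 / (2 * (1 - u)) := by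
  have hu : 0 < 1 - u := by linarith
  have h2 : (∫ t in (0:ℝ)..u, (1 - t)⁻¹) = -Real.log (1 - u) := by
    rw [intervalIntegral.integral_comp_sub_left (fun s => s⁻¹) 1, sub_zero]
    rw [integral_inv_of_pos hu one_pos]
    rw [Real.log_div one_ne_zero hu.ne']
    simp
  have h3 : (∫ t in (0:ℝ)..u, (1 + t / (1 - u))) = u + u ^ 2 / (2 * (1 - u)) := by
    rw [intervalIntegral.integral_add (intervalIntegrable_const)
      ((intervalIntegral.intervalIntegrable_id).div_const _)]
    simp [integral_id]
    rw [div_div]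
  rw [← h2, ← h3]
  apply intervalIntegral.integral_mono_on h0
  · apply ContinuousOn.intervalIntegrable
    apply ContinuousOn.inv₀ (by fun_prop)
    intro t ht
    rw [Set.uIcc_of_le h0] at ht
    intro h; linarith [ht.2]
  · apply Continuous.intervalIntegrable; fun_prop
  · intro t ht
    have ht1 : 0 ≤ t := ht.1
    have ht2 : t ≤ u := ht.2
    have h1t : 0 < 1 - t := by linarith
    have e1 : (1 - t)⁻¹ = 1 + t / (1 - t) := by field_simp; ring
    have e2 : t / (1 - t) ≤ t / (1 - u) := by
      apply div_le_div_of_nonneg_left ht1 hu (by linarith)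
    linarith
open scoped ENNReal NNReal

lemma my_gauss_pt (m w l : ℝ) (hc : 0 < 1 - 2 * l * w ^ 2) (y : ℝ) :
    gaussianPDFReal 0 1 y * Real.exp (l * (m + w * y) ^ 2)
      = (Real.sqrt (2 * Real.pi))⁻¹ * (Real.exp (l * m ^ 2 / (1 - 2 * l * w ^ 2)) *
        Real.exp (-((1 - 2 * l * w ^ 2) / 2) *
          (y - l * m * w / ((1 - 2 * l * w ^ 2) / 2)) ^ 2)) := by
  have hne : (1 - 2 * l * w ^ 2) ≠ 0 := hc.ne'
  rw [gaussianPDFReal]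
  push_cast
  rw [mul_one, mul_assoc, ← Real.exp_add, ← Real.exp_add]
  congr 1
  congr 1
  field_simp
  ring

lemma my_gauss_mgf (m w l : ℝ) (hc : 0 < 1 - 2 * l * w ^ 2) :
    Integrable (fun y => Real.exp (l * (m + w * y) ^ 2)) (gaussianReal 0 1) ∧
    ∫ y, Real.exp (l * (m + w * y) ^ 2) ∂(gaussianReal 0 1) =
      Real.exp (l * m ^ 2 / (1 - 2 * l * w ^ 2)) / Real.sqrt (1 - 2 * l * w ^ 2) := by
  have hne : (1 - 2 * l * w ^ 2) ≠ 0 := hc.ne'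
  set c : ℝ := (1 - 2 * l * w ^ 2) / 2 with hcdef
  have hc2 : 0 < c := by positivity
  set d : ℝ := l * m * w / c with hddef
  have hgr : gaussianReal 0 1
      = volume.withDensity (fun x => ((gaussianPDFReal 0 1 x).toNNReal : ℝ≥0∞)) := by
    rw [gaussianReal_of_var_ne_zero 0 one_ne_zero]; rfl
  have hmeasf : Measurable (fun x => (gaussianPDFReal 0 1 x).toNNReal) :=
    (measurable_gaussianPDFReal 0 1).real_toNNReal
  have hsmul : ∀ y : ℝ, (gaussianPDFReal 0 1 y).toNNReal • Real.exp (l * (m + w * y) ^ 2)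
      = (Real.sqrt (2 * Real.pi))⁻¹ * (Real.exp (l * m ^ 2 / (1 - 2 * l * w ^ 2)) *
        Real.exp (-c * (y - d) ^ 2)) := by
    intro y
    rw [NNReal.smul_def, Real.coe_toNNReal _ (gaussianPDFReal_nonneg 0 1 y)]
    exact my_gauss_pt m w l hc y
  have hint2 : Integrable (fun y => (Real.sqrt (2 * Real.pi))⁻¹ *
      (Real.exp (l * m ^ 2 / (1 - 2 * l * w ^ 2)) * Real.exp (-c * (y - d) ^ 2))) volume := by
    exact (((integrable_exp_neg_mul_sq hc2).comp_sub_right d).const_mul _).const_mul _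
  constructor
  · rw [hgr, integrable_withDensity_iff_integrable_smul hmeasf]
    exact hint2.congr (Filter.Eventually.of_forall fun y => (hsmul y).symm)
  · rw [hgr, integral_withDensity_eq_integral_smul hmeasf]
    rw [integral_congr_ae (Filter.Eventually.of_forall hsmul)]
    rw [MeasureTheory.integral_const_mul, MeasureTheory.integral_const_mul]
    rw [MeasureTheory.integral_sub_right_eq_self (fun u => Real.exp (-c * u ^ 2)) d]
    rw [integral_gaussian]
    rw [div_eq_mul_inv, mul_comm (Real.exp _)]
    rw [← mul_assoc, mul_comm _ (Real.exp _), mul_assoc]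
    congr 1
    rw [show (1 - 2 * l * w ^ 2) = 2 * c from by rw [hcdef]; ring]
    rw [← Real.sqrt_inv (2 * Real.pi), ← Real.sqrt_inv (2 * c),
      ← Real.sqrt_mul (by positivity : (0:ℝ) ≤ (2 * Real.pi)⁻¹)]
    congr 1
    field_simp

lemma my_coord_bound (m w l b : ℝ) (hl : 0 ≤ l) (hw0 : 0 ≤ w ^ 2) (hwb : w ^ 2 ≤ b)
    (hb : 2 * l * b < 1) :
    Real.exp (l * m ^ 2 / (1 - 2 * l * w ^ 2)) / Real.sqrt (1 - 2 * l * w ^ 2)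
      ≤ Real.exp (l * (m ^ 2 + w ^ 2) + l ^ 2 * (w ^ 4 + 2 * w ^ 2 * m ^ 2) / (1 - 2 * l * b)) := by
  set u : ℝ := 2 * l * w ^ 2 with hu
  have hu0 : 0 ≤ u := by positivity
  have hub : u ≤ 2 * l * b := by
    apply mul_le_mul_of_nonneg_left hwb (by positivity)
  have hcb : 0 < 1 - 2 * l * b := by linarith
  have hcw : 0 < 1 - u := by linarith
  have hcbw : 1 - 2 * l * b ≤ 1 - u := by linarith
  have hsq : Real.sqrt (1 - u) = Real.exp (Real.log (1 - u) / 2) := by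
    rw [← Real.exp_log (Real.sqrt_pos.mpr hcw), Real.log_sqrt hcw.le]
  rw [hsq, ← Real.exp_sub, Real.exp_le_exp]
  have hlog := my_log_ineq hu0 (by linarith : u < 1)
  have e1 : l * m ^ 2 / (1 - u) = l * m ^ 2 + 2 * l ^ 2 * w ^ 2 * m ^ 2 / (1 - u) := by
    field_simp
    ring
  have e2 : u + u ^ 2 / (2 * (1 - u)) = 2 * l * w ^ 2 + 2 * (l ^ 2 * w ^ 4 / (1 - u)) := by
    rw [hu]; field_simp
  have d1 : 2 * l ^ 2 * w ^ 2 * m ^ 2 / (1 - u) ≤ 2 * l ^ 2 * w ^ 2 * m ^ 2 / (1 - 2 * l * b) :=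
    div_le_div_of_nonneg_left (by positivity) hcb hcbw
  have d2 : l ^ 2 * w ^ 4 / (1 - u) ≤ l ^ 2 * w ^ 4 / (1 - 2 * l * b) :=
    div_le_div_of_nonneg_left (by positivity) hcb hcbw
  have e3 : l ^ 2 * (w ^ 4 + 2 * w ^ 2 * m ^ 2) / (1 - 2 * l * b)
      = l ^ 2 * w ^ 4 / (1 - 2 * l * b) + 2 * l ^ 2 * w ^ 2 * m ^ 2 / (1 - 2 * l * b) := by
    field_simp
  rw [e1, e3]
  rw [e2] at hlog
  linarith

lemma my_iIndepFun_congr {ι Ω : Type*} {mΩ : MeasurableSpace Ω} {μ : Measure Ω}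
    {β : ι → Type*} [m : ∀ i, MeasurableSpace (β i)] {f g : ∀ i, Ω → β i}
    (hfg : ∀ i, f i =ᵐ[μ] g i) (hf : iIndepFun f μ) : iIndepFun g μ := by
  rw [iIndepFun_iff_measure_inter_preimage_eq_mul] at hf ⊢
  intro S sets hsets
  have hpre : ∀ i, (g i ⁻¹' sets i : Set Ω) =ᵐ[μ] (f i ⁻¹' sets i : Set Ω) := by
    intro i
    filter_upwards [hfg i] with a ha
    rw [eq_iff_iff]
    change g i a ∈ sets i ↔ f i a ∈ sets i
    rw [ha]
  have hint : (⋂ i ∈ S, g i ⁻¹' sets i : Set Ω) =ᵐ[μ] (⋂ i ∈ S, f i ⁻¹' sets i : Set Ω) := by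
    have hball : ∀ᵐ a ∂μ, ∀ i ∈ S, f i a = g i a :=
      (ae_ball_iff S.countable_toSet).mpr fun i _ => hfg i
    filter_upwards [hball] with a ha
    rw [eq_iff_iff]
    change (a ∈ ⋂ i ∈ S, g i ⁻¹' sets i) ↔ (a ∈ ⋂ i ∈ S, f i ⁻¹' sets i)
    simp only [Set.mem_iInter, Set.mem_preimage]
    exact ⟨fun h i hi => by rw [ha i hi]; exact h i hi, fun h i hi => by rw [← ha i hi]; exact h i hi⟩
  calc μ (⋂ i ∈ S, g i ⁻¹' sets i) = μ (⋂ i ∈ S, f i ⁻¹' sets i) := measure_congr hint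
    _ = ∏ i ∈ S, μ (f i ⁻¹' sets i) := hf S hsets
    _ = ∏ i ∈ S, μ (g i ⁻¹' sets i) := Finset.prod_congr rfl fun i _ =>
        (measure_congr (hpre i)).symm

theorem chi_square_upper_deviation
    {Ω : Type*} [MeasureSpace Ω] (μ : Measure Ω) [IsProbabilityMeasure μ]
    (D : ℕ) (hD : 0 < D) (ω : Fin D → Ω → ℝ) (ν v : Fin D → ℝ)
    (hindep : iIndepFun ω μ)
    (hlaw : ∀ j, Measure.map (ω j) μ = gaussianReal 0 1)
    (T : Ω → ℝ) (hT : ∀ a, T a = ∑ j, (ν j + v j * ω j a) ^ 2)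
    (S : ℝ) (hS : S = ∑ j, (v j) ^ 4 + 2 * ∑ j, (v j) ^ 2 * (ν j) ^ 2)
    (x : ℝ) (hx : 0 < x) :
    μ {a | T a - (∑ j, ((ν j) ^ 2 + (v j) ^ 2)) >
        2 * Real.sqrt (S * x) +
          2 * x * Finset.univ.sup' ⟨⟨0, hD⟩, Finset.mem_univ _⟩ (fun j => (v j) ^ 2)} ≤
      ENNReal.ofReal (Real.exp (-x)) := by
  classical
  set B : ℝ := Finset.univ.sup' ⟨⟨0, hD⟩, Finset.mem_univ _⟩ (fun j => (v j) ^ 2) with hB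
  set M : ℝ := ∑ j, ((ν j) ^ 2 + (v j) ^ 2) with hM
  have hBge : ∀ j, (v j) ^ 2 ≤ B := fun j => by
    rw [hB]; exact Finset.le_sup' (fun j => (v j) ^ 2) (Finset.mem_univ j)
  have hB0 : 0 ≤ B := le_trans (sq_nonneg (v ⟨0, hD⟩)) (hBge ⟨0, hD⟩)
  have hsum1 : (0:ℝ) ≤ ∑ j, (v j) ^ 4 :=
    Finset.sum_nonneg fun j _ => by positivity
  have hsum2 : (0:ℝ) ≤ ∑ j, (v j) ^ 2 * (ν j) ^ 2 :=
    Finset.sum_nonneg fun j _ => by positivity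
  by_cases hS0 : S = 0
  · -- degenerate case : all v j = 0
    have hsum1' : ∑ j, (v j) ^ 4 = 0 := by
      rw [hS0] at hS; linarith
    have hv : ∀ j, v j = 0 := by
      intro j
      have h4 : ∀ j ∈ Finset.univ, (0:ℝ) ≤ (v j) ^ 4 := fun j _ => by positivity
      have h0 : (v j) ^ 4 = 0 :=
        (Finset.sum_eq_zero_iff_of_nonneg h4).mp hsum1' j (Finset.mem_univ j)
      exact pow_eq_zero_iff (by norm_num) |>.mp h0
    have hBzero : B = 0 := by
      apply le_antisymm _ hB0
      apply Finset.sup'_le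
      intro j _
      rw [hv j]; norm_num
    have hempty : {a | T a - M >
        2 * Real.sqrt (S * x) + 2 * x * B} = ∅ := by
      apply Set.eq_empty_iff_forall_notMem.mpr
      intro a ha
      simp only [Set.mem_setOf_eq] at ha
      have hTa : T a = M := by
        rw [hT a, hM]
        apply Finset.sum_congr rfl
        intro j _
        rw [hv j]; ring
      rw [hTa, hS0, hBzero] at ha
      simp at ha
    rw [hempty]
    simp
  · -- main case
    have hSpos : 0 < S := lt_of_le_of_ne (by rw [hS]; positivity) (Ne.symm hS0)
    have hBpos : 0 < B := by
      rcases lt_or_eq_of_le hB0 with h | h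
      · exact h
      · exfalso
        have hv : ∀ j, v j = 0 := by
          intro j
          have := hBge j
          rw [← h] at this
          have := sq_nonneg (v j)
          have : (v j) ^ 2 = 0 := le_antisymm (h ▸ hBge j) (sq_nonneg (v j))
          exact pow_eq_zero_iff (by norm_num) |>.mp this
        apply hS0
        rw [hS]
        simp [hv]
    set A : ℝ := Real.sqrt S with hA
    set C : ℝ := Real.sqrt x with hC
    have hApos : 0 < A := Real.sqrt_pos.mpr hSpos
    have hCpos : 0 < C := Real.sqrt_pos.mpr hx
    have hden : 0 < A + 2 * B * C := by positivity
    set l : ℝ := C / (A + 2 * B * C) with hl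
    have hl0 : 0 < l := by positivity
    have hc : 1 - 2 * l * B = A / (A + 2 * B * C) := by
      rw [hl]; field_simp; ring
    have hcpos : 0 < 1 - 2 * l * B := by rw [hc]; positivity
    have hcj : ∀ j, 0 < 1 - 2 * l * (v j) ^ 2 := by
      intro j
      have h1 : 2 * l * (v j) ^ 2 ≤ 2 * l * B :=
        mul_le_mul_of_nonneg_left (hBge j) (by positivity)
      linarith
    -- measurable modifications
    have haem : ∀ j, AEMeasurable (ω j) μ := by
      intro j
      apply aemeasurable_of_map_neZero
      rw [hlaw j]
      infer_instance
    set ω' : Fin D → Ω → ℝ := fun j => (haem j).mk (ω j) with hω'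
    have hmeasω' : ∀ j, Measurable (ω' j) := fun j => (haem j).measurable_mk
    have haeeq : ∀ j, ω j =ᵐ[μ] ω' j := fun j => (haem j).ae_eq_mk
    have hlaw' : ∀ j, Measure.map (ω' j) μ = gaussianReal 0 1 := fun j => by
      rw [← Measure.map_congr (haeeq j), hlaw j]
    have hindep' : iIndepFun ω' μ :=
      my_iIndepFun_congr haeeq hindep
    set X : Fin D → Ω → ℝ := fun j a => (ν j + v j * ω' j a) ^ 2 with hX
    have hmeasX : ∀ j, Measurable (X j) := fun j => by
      apply Measurable.pow_const
      exact (measurable_const.add (measurable_const.mul (hmeasω' j)))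
    have hindepX : iIndepFun X μ := by
      exact hindep'.comp (fun j y => (ν j + v j * y) ^ 2)
        (fun j => (measurable_const.add (measurable_const.mul measurable_id)).pow_const 2)
    -- per-coordinate integrability and mgf formula
    have hGint : ∀ j, Integrable (fun a => Real.exp (l * X j a)) μ := by
      intro j
      have h1 := (my_gauss_mgf (ν j) (v j) l (hcj j)).1
      have h2 : AEStronglyMeasurable (fun y => Real.exp (l * (ν j + v j * y) ^ 2))
          (Measure.map (ω' j) μ) := by
        exact (((measurable_const.add (measurable_const.mul measurable_id)).pow_const
          2).const_mul l).exp.aestronglyMeasurable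
      have := (integrable_map_measure h2 (hmeasω' j).aemeasurable).mp
        (by rw [hlaw' j]; exact h1)
      exact this
    have hmgfj : ∀ j, mgf (X j) μ l =
        Real.exp (l * (ν j) ^ 2 / (1 - 2 * l * (v j) ^ 2)) /
          Real.sqrt (1 - 2 * l * (v j) ^ 2) := by
      intro j
      have h2 : AEStronglyMeasurable (fun y => Real.exp (l * (ν j + v j * y) ^ 2))
          (Measure.map (ω' j) μ) := by
        exact (((measurable_const.add (measurable_const.mul measurable_id)).pow_const
          2).const_mul l).exp.aestronglyMeasurable
      have h3 := integral_map (hmeasω' j).aemeasurable h2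
      rw [hlaw' j] at h3
      rw [← (my_gauss_mgf (ν j) (v j) l (hcj j)).2, h3]
      rfl
    have hmgfj_le : ∀ j, mgf (X j) μ l ≤
        Real.exp (l * ((ν j) ^ 2 + (v j) ^ 2) +
          l ^ 2 * ((v j) ^ 4 + 2 * (v j) ^ 2 * (ν j) ^ 2) / (1 - 2 * l * B)) := by
      intro j
      rw [hmgfj j]
      exact my_coord_bound (ν j) (v j) l B hl0.le (sq_nonneg _) (hBge j) (by linarith)
    -- integrability of exp (l * T)
    have hallae : ∀ᵐ a ∂μ, ∀ j, ω j a = ω' j a := ae_all_iff.mpr haeeq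
    have hTae : (fun a => Real.exp (l * T a)) =ᵐ[μ]
        (fun a => Real.exp (l * (∑ j, X j) a)) := by
      filter_upwards [hallae] with a ha
      congr 1
      rw [hT a]
      simp only [Finset.sum_apply, hX]
      congr 1
      exact Finset.sum_congr rfl fun j _ => by rw [ha j]
    have hintsum : Integrable (fun a => Real.exp (l * (∑ j, X j) a)) μ :=
      hindepX.integrable_exp_mul_sum hmeasX (fun j _ => hGint j)
    have hintT : Integrable (fun a => Real.exp (l * T a)) μ :=
      hintsum.congr hTae.symm
    -- mgf of T bound
    have hmgfT : mgf T μ l = ∏ j, mgf (X j) μ l := by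
      rw [show mgf T μ l = mgf (∑ j, X j) μ l from integral_congr_ae hTae]
      exact hindepX.mgf_sum hmeasX Finset.univ
    have hsumid : ∑ j, (l * ((ν j) ^ 2 + (v j) ^ 2) +
        l ^ 2 * ((v j) ^ 4 + 2 * (v j) ^ 2 * (ν j) ^ 2) / (1 - 2 * l * B))
        = l * M + l ^ 2 * S / (1 - 2 * l * B) := by
      rw [Finset.sum_add_distrib, ← Finset.mul_sum, ← Finset.sum_div, ← Finset.mul_sum, hM, hS]
      congr 2
      rw [Finset.sum_add_distrib]
      congr 1
      rw [Finset.mul_sum]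
      ring_nf
    have hmgfT_le : mgf T μ l ≤ Real.exp (l * M + l ^ 2 * S / (1 - 2 * l * B)) := by
      rw [hmgfT, ← hsumid, Real.exp_sum]
      exact Finset.prod_le_prod (fun j _ => mgf_nonneg) (fun j _ => hmgfj_le j)
    -- exponent identity
    have hSx : Real.sqrt (S * x) = A * C := Real.sqrt_mul hSpos.le x
    have hfinal : l ^ 2 * S / (1 - 2 * l * B) - l * (2 * Real.sqrt (S * x) + 2 * x * B)
        = -x := by
      rw [hc, hSx, hl]
      rw [show S = A ^ 2 from (Real.sq_sqrt hSpos.le).symm,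
        show x = C ^ 2 from (Real.sq_sqrt hx.le).symm]
      field_simp
      ring
    -- Chernoff
    set t : ℝ := 2 * Real.sqrt (S * x) + 2 * x * B with ht
    have cher := measure_ge_le_exp_mul_mgf (μ := μ) (X := T) (M + t) hl0.le hintT
    have hbound : Real.exp (-l * (M + t)) * mgf T μ l ≤ Real.exp (-x) := by
      calc Real.exp (-l * (M + t)) * mgf T μ l
          ≤ Real.exp (-l * (M + t)) * Real.exp (l * M + l ^ 2 * S / (1 - 2 * l * B)) := by
            exact mul_le_mul_of_nonneg_left hmgfT_le (Real.exp_nonneg _)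
        _ = Real.exp (l ^ 2 * S / (1 - 2 * l * B) - l * t) := by
            rw [← Real.exp_add]; congr 1; ring
        _ = Real.exp (-x) := by rw [hfinal]
    have hsub : {a | T a - M > t} ⊆ {a | M + t ≤ T a} := by
      intro a ha
      simp only [Set.mem_setOf_eq] at ha ⊢
      linarith
    calc μ {a | T a - M > t} ≤ μ {a | M + t ≤ T a} := measure_mono hsub
      _ ≤ ENNReal.ofReal (Real.exp (-x)) := by
          rw [← ENNReal.ofReal_toReal (measure_ne_top μ _)]
          exact ENNReal.ofReal_le_ofReal (le_trans cher hbound)
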